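/- Let T > 0, b > 0, and assume m + ε₀ > 0 where ε₀ = max(⟨a⁺⟩ − m, 0). Let ρ₀ ∈ L∞(ℝ^d) satisfy 0 ≤ ρ₀ ≤ b a.e., and let u, ũ: [0,T] → L∞(ℝ^d) be continuous curves with nonnegative values and sup_{t∈[0,T]} ‖u_t‖_{L∞} ≤ b, sup_{t∈[0,T]} ‖ũ_t‖_{L∞} ≤ b. Then sup_{t∈[0,T]} ‖F(u)_t − F(ũ)_t‖_{L∞} ≤ q(T) · sup_{t∈[0,T]} ‖u_t − ũ_t‖_{L∞}, where q(T) = b ⟨a⁻⟩ ∫₀^T e^{ε₀ s} ds + (1 − e^{−(m+ε₀)T}). In particular, F is a contraction on this set for all sufficiently small T. -/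

import Mathlib

open MeasureTheory Filter Set Topology
open scoped ENNReal

noncomputable section

abbrev Rd (d : ℕ) := Fin d → ℝ

/-- the convolution `(a ∗ ρ)(x) = ∫ a(x−y) ρ(y) dy` -/
def conv {d : ℕ} (a ρ : Rd d → ℝ) (x : Rd d) : ℝ := ∫ y : Rd d, a (x - y) * ρ y

/-- the fixed-point map `F` from the proof of Theorem 3.1 (eq. (26)):
`(F(u)_t)(x) = ρ₀(x) exp(−(m+ε₀)t − ∫₀^t e^{ε₀τ}(a⁻ ∗ u_τ)(x) dτ)
 + ∫₀^t (a⁺ ∗ u_τ)(x) exp(−(m+ε₀)(t−τ) − ∫_τ^t e^{ε₀ s}(a⁻ ∗ u_s)(x) ds) dτ`. -/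
def Fmap {d : ℕ} (m eps0 : ℝ) (ap am : Rd d → ℝ) (ρ0 : Rd d → ℝ)
    (u : ℝ → Rd d → ℝ) (t : ℝ) (x : Rd d) : ℝ :=
  ρ0 x * Real.exp (-(m + eps0) * t -
      ∫ τ in Set.Ioc (0 : ℝ) t, Real.exp (eps0 * τ) * conv am (u τ) x)
    + ∫ τ in Set.Ioc (0 : ℝ) t, conv ap (u τ) x *
        Real.exp (-(m + eps0) * (t - τ) -
          ∫ s in Set.Ioc τ t, Real.exp (eps0 * s) * conv am (u s) x)


private lemma abs_exp_sub_exp {a b : ℝ} (ha : a ≤ 0) (hb : b ≤ 0) :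
    |Real.exp a - Real.exp b| ≤ |a - b| := by
  wlog h : b ≤ a generalizing a b
  · rw [abs_sub_comm, abs_sub_comm a b]; exact this hb ha (le_of_not_ge h)
  have h1 : Real.exp a ≤ 1 := Real.exp_le_one_iff.2 ha
  have h2 : (b - a) + 1 ≤ Real.exp (b - a) := Real.add_one_le_exp _
  have h3 : Real.exp b = Real.exp a * Real.exp (b - a) := by
    rw [← Real.exp_add]; ring_nf
  have h4 : 0 < Real.exp a := Real.exp_pos a
  have h5 : Real.exp b ≤ Real.exp a := Real.exp_le_exp.2 h
  rw [abs_of_nonneg (by linarith), abs_of_nonneg (by linarith)]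
  nlinarith

variable {d : ℕ}

lemma ae_shift {P : Rd d → Prop} (h : ∀ᵐ z ∂(volume : Measure (Rd d)), P z) (x : Rd d) :
    ∀ᵐ y ∂(volume : Measure (Rd d)), P (x - y) := by
  have : (∀ᶠ z in Filter.map (fun y : Rd d => x - y) (ae volume), P z) := by
    rw [Measure.map_sub_left_ae volume x]; exact h
  exact this

lemma aesm_shift {a : Rd d → ℝ} (ha : AEStronglyMeasurable a volume) (x : Rd d) :
    AEStronglyMeasurable (fun y => a (x - y)) volume :=
  ha.comp_quasiMeasurePreserving
    (Measure.measurePreserving_sub_left volume x).quasiMeasurePreserving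

lemma ae_abs_le_of_eLpNorm {w : Rd d → ℝ} {c : ℝ} (hc : 0 ≤ c)
    (h : eLpNorm w ⊤ volume ≤ ENNReal.ofReal c) :
    ∀ᵐ y ∂(volume : Measure (Rd d)), |w y| ≤ c := by
  rw [eLpNorm_exponent_top, eLpNormEssSup] at h
  filter_upwards [ae_le_essSup (f := fun y => (‖w y‖₊ : ℝ≥0∞)) (μ := volume)] with y hy
  have h2 : (‖w y‖₊ : ℝ≥0∞) ≤ ENNReal.ofReal c := hy.trans h
  rw [← ENNReal.ofReal_coe_nnreal, coe_nnnorm] at h2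
  simpa [Real.norm_eq_abs] using (ENNReal.ofReal_le_ofReal_iff hc).1 h2

lemma integrable_shift_mul {a : Rd d → ℝ} (ha : Integrable a volume)
    {w : Rd d → ℝ} (hw : AEStronglyMeasurable w volume) {c : ℝ}
    (hwb : ∀ᵐ y ∂(volume : Measure (Rd d)), |w y| ≤ c) (x : Rd d) :
    Integrable (fun y => a (x - y) * w y) volume := by
  have hax : Integrable (fun y => a (x - y)) volume := ha.comp_sub_left x
  refine Integrable.mono' (hax.abs.mul_const c) ((aesm_shift ha.1 x).mul hw) ?_
  filter_upwards [hwb] with y hy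
  rw [Real.norm_eq_abs, abs_mul]
  exact mul_le_mul_of_nonneg_left hy (abs_nonneg _)

lemma conv_sub {a : Rd d → ℝ} (ha : Integrable a volume)
    {w w' : Rd d → ℝ} (hw : AEStronglyMeasurable w volume)
    (hw' : AEStronglyMeasurable w' volume) {c c' : ℝ}
    (hwb : ∀ᵐ y ∂(volume : Measure (Rd d)), |w y| ≤ c)
    (hw'b : ∀ᵐ y ∂(volume : Measure (Rd d)), |w' y| ≤ c') (x : Rd d) :
    conv a w x - conv a w' x = ∫ y : Rd d, a (x - y) * (w y - w' y) := by
  rw [conv, conv, ← integral_sub (integrable_shift_mul ha hw hwb x)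
      (integrable_shift_mul ha hw' hw'b x)]
  simp [mul_sub]

lemma conv_abs_le {a : Rd d → ℝ} (ha : Integrable a volume)
    (hapos : ∀ᵐ z ∂(volume : Measure (Rd d)), 0 ≤ a z)
    {w : Rd d → ℝ} (hw : AEStronglyMeasurable w volume) {c : ℝ} (hc : 0 ≤ c)
    (hwb : ∀ᵐ y ∂(volume : Measure (Rd d)), |w y| ≤ c) (x : Rd d) :
    |conv a w x| ≤ (∫ z, a z) * c := by
  have hax : Integrable (fun y => a (x - y)) volume := ha.comp_sub_left x
  have h1 : |conv a w x| ≤ ∫ y : Rd d, |a (x - y)| * c := by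
    rw [conv, ← Real.norm_eq_abs]
    refine norm_integral_le_of_norm_le (hax.abs.mul_const c) ?_
    filter_upwards [hwb] with y hy
    rw [Real.norm_eq_abs, abs_mul]
    exact mul_le_mul_of_nonneg_left hy (abs_nonneg _)
  refine h1.trans (le_of_eq ?_)
  rw [integral_mul_const, integral_sub_left_eq_self (fun z => |a z|) volume x]
  congr 1
  refine integral_congr_ae ?_
  filter_upwards [hapos] with z hz using abs_of_nonneg hz

lemma conv_nonneg' {a : Rd d → ℝ}
    (hapos : ∀ᵐ z ∂(volume : Measure (Rd d)), 0 ≤ a z)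
    {w : Rd d → ℝ} (hwpos : ∀ᵐ y ∂(volume : Measure (Rd d)), 0 ≤ w y) (x : Rd d) :
    0 ≤ conv a w x := by
  refine integral_nonneg_of_ae ?_
  filter_upwards [ae_shift hapos x, hwpos] with y h1 h2 using mul_nonneg h1 h2

lemma conv_contOn {T b : ℝ} (hb : 0 ≤ b) {a : Rd d → ℝ} (ha : Integrable a volume)
    {w : ℝ → Rd d → ℝ}
    (hw_meas : ∀ t ∈ Icc (0:ℝ) T, AEStronglyMeasurable (w t) volume)
    (hw_bdd : ∀ t ∈ Icc (0:ℝ) T, eLpNorm (w t) ⊤ volume ≤ ENNReal.ofReal b)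
    (hw_cont : ∀ t ∈ Icc (0:ℝ) T,
      Tendsto (fun s => eLpNorm (w s - w t) ⊤ volume) (𝓝[Icc (0:ℝ) T] t) (𝓝 0))
    (x : Rd d) : ContinuousOn (fun τ => conv a (w τ) x) (Icc 0 T) := by
  intro τ₀ hτ₀
  rw [ContinuousWithinAt, tendsto_iff_dist_tendsto_zero]
  have hE : ∀ s ∈ Icc (0:ℝ) T,
      eLpNorm (w s - w τ₀) ⊤ volume ≤ ENNReal.ofReal (2 * b) := fun s hs => by
    refine (eLpNorm_sub_le (hw_meas s hs) (hw_meas τ₀ hτ₀) le_top).trans ?_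
    calc eLpNorm (w s) ⊤ volume + eLpNorm (w τ₀) ⊤ volume
        ≤ ENNReal.ofReal b + ENNReal.ofReal b := add_le_add (hw_bdd s hs) (hw_bdd τ₀ hτ₀)
      _ = ENNReal.ofReal (2 * b) := by rw [← ENNReal.ofReal_add hb hb]; ring_nf
  set ε : ℝ → ℝ := fun s => (eLpNorm (w s - w τ₀) ⊤ volume).toReal with hεdef
  have hεnn : ∀ s, 0 ≤ ε s := fun s => ENNReal.toReal_nonneg
  have hε0 : Tendsto ε (𝓝[Icc (0:ℝ) T] τ₀) (𝓝 0) := by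
    have := (ENNReal.tendsto_toReal (a := 0) (by simp)).comp (hw_cont τ₀ hτ₀)
    simp only [ENNReal.toReal_zero] at this; exact this
  have hbound : ∀ s ∈ Icc (0:ℝ) T,
      dist (conv a (w s) x) (conv a (w τ₀) x) ≤ (∫ z, |a z|) * ε s := by
    intro s hs
    have hfin : eLpNorm (w s - w τ₀) ⊤ volume ≠ ⊤ :=
      lt_of_le_of_lt (hE s hs) ENNReal.ofReal_lt_top |>.ne
    have hae : ∀ᵐ y ∂(volume : Measure (Rd d)), |w s y - w τ₀ y| ≤ ε s := by
      have := ae_abs_le_of_eLpNorm (w := w s - w τ₀) (hεnn s)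
        (le_of_eq (ENNReal.ofReal_toReal hfin).symm)
      filter_upwards [this] with y hy; simpa using hy
    have haeb : ∀ᵐ y ∂(volume : Measure (Rd d)), |w s y| ≤ b := by
      filter_upwards [ae_abs_le_of_eLpNorm hb (hw_bdd s hs)] with y hy using hy
    have haeb0 : ∀ᵐ y ∂(volume : Measure (Rd d)), |w τ₀ y| ≤ b := by
      filter_upwards [ae_abs_le_of_eLpNorm hb (hw_bdd τ₀ hτ₀)] with y hy using hy
    rw [Real.dist_eq, conv_sub ha (hw_meas s hs) (hw_meas τ₀ hτ₀) haeb haeb0 x,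
      ← Real.norm_eq_abs]
    have hax : Integrable (fun y => a (x - y)) volume := ha.comp_sub_left x
    refine (norm_integral_le_of_norm_le (hax.abs.mul_const (ε s)) ?_).trans (le_of_eq ?_)
    · filter_upwards [hae] with y hy
      rw [Real.norm_eq_abs, abs_mul]
      exact mul_le_mul_of_nonneg_left hy (abs_nonneg _)
    · rw [integral_mul_const, integral_sub_left_eq_self (fun z => |a z|) volume x]
  refine squeeze_zero' (g := fun s => (∫ z : Rd d, |a z|) * ε s) ?_ ?_ ?_
  · exact Filter.Eventually.of_forall fun s => dist_nonneg
  · filter_upwards [self_mem_nhdsWithin] with s hs using hbound s hs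
  · have := hε0.const_mul (∫ z, |a z|)
    simpa using this

set_option maxHeartbeats 1000000 in
lemma key_pointwise
    {m eps0 T b N : ℝ} (hL : 0 < m + eps0) (he0 : 0 ≤ eps0) (hT : 0 < T) (hb : 0 < b)
    (hN : 0 ≤ N)
    {ap am : Rd d → ℝ} (hap : Integrable ap volume) (ham : Integrable am volume)
    (hap_pos : ∀ᵐ z ∂(volume : Measure (Rd d)), 0 ≤ ap z)
    (ham_pos : ∀ᵐ z ∂(volume : Measure (Rd d)), 0 ≤ am z)
    (hapm : (∫ z, ap z) ≤ m + eps0)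
    {u v : ℝ → Rd d → ℝ}
    (hu_meas : ∀ τ ∈ Icc (0:ℝ) T, AEStronglyMeasurable (u τ) volume)
    (hu_pos : ∀ τ ∈ Icc (0:ℝ) T, ∀ᵐ y ∂(volume : Measure (Rd d)), 0 ≤ u τ y)
    (hu_bdd : ∀ τ ∈ Icc (0:ℝ) T, eLpNorm (u τ) ⊤ volume ≤ ENNReal.ofReal b)
    (hu_cont : ∀ τ ∈ Icc (0:ℝ) T,
      Tendsto (fun s => eLpNorm (u s - u τ) ⊤ volume) (𝓝[Icc (0:ℝ) T] τ) (𝓝 0))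
    (hv_meas : ∀ τ ∈ Icc (0:ℝ) T, AEStronglyMeasurable (v τ) volume)
    (hv_pos : ∀ τ ∈ Icc (0:ℝ) T, ∀ᵐ y ∂(volume : Measure (Rd d)), 0 ≤ v τ y)
    (hv_bdd : ∀ τ ∈ Icc (0:ℝ) T, eLpNorm (v τ) ⊤ volume ≤ ENNReal.ofReal b)
    (hv_cont : ∀ τ ∈ Icc (0:ℝ) T,
      Tendsto (fun s => eLpNorm (v s - v τ) ⊤ volume) (𝓝[Icc (0:ℝ) T] τ) (𝓝 0))
    (hNle : ∀ τ ∈ Icc (0:ℝ) T, ∀ᵐ y ∂(volume : Measure (Rd d)), |u τ y - v τ y| ≤ N)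
    {t : ℝ} (ht : t ∈ Icc (0:ℝ) T)
    {ρ0 : Rd d → ℝ} {x : Rd d} (hx0 : 0 ≤ ρ0 x) (hxb : ρ0 x ≤ b) :
    |Fmap m eps0 ap am ρ0 u t x - Fmap m eps0 ap am ρ0 v t x| ≤
      (b * (∫ z, am z) * (∫ s in Ioc (0:ℝ) T, Real.exp (eps0 * s)) +
        (1 - Real.exp (-(m + eps0) * T))) * N := by
  obtain ⟨ht0, htT⟩ := ht
  set L : ℝ := m + eps0 with hLdef
  set Am : ℝ := ∫ z, am z with hAmdef
  set Ap : ℝ := ∫ z, ap z with hApdef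
  set IT : ℝ := ∫ s in Ioc (0:ℝ) T, Real.exp (eps0 * s) with hITdef
  have hAm : 0 ≤ Am := integral_nonneg_of_ae ham_pos
  have hAp : 0 ≤ Ap := integral_nonneg_of_ae hap_pos
  have hIT : 0 ≤ IT := setIntegral_nonneg measurableSet_Ioc fun s _ => (Real.exp_pos _).le
  -- a.e. bounds on u, v and their difference
  have aeu : ∀ τ ∈ Icc (0:ℝ) T, ∀ᵐ y ∂(volume : Measure (Rd d)), |u τ y| ≤ b :=
    fun τ hτ => ae_abs_le_of_eLpNorm hb.le (hu_bdd τ hτ)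
  have aev : ∀ τ ∈ Icc (0:ℝ) T, ∀ᵐ y ∂(volume : Measure (Rd d)), |v τ y| ≤ b :=
    fun τ hτ => ae_abs_le_of_eLpNorm hb.le (hv_bdd τ hτ)
  -- conv bounds
  have hCu0 : ∀ τ ∈ Icc (0:ℝ) T, 0 ≤ conv am (u τ) x :=
    fun τ hτ => conv_nonneg' ham_pos (hu_pos τ hτ) x
  have hCv0 : ∀ τ ∈ Icc (0:ℝ) T, 0 ≤ conv am (v τ) x :=
    fun τ hτ => conv_nonneg' ham_pos (hv_pos τ hτ) x
  have hgu0 : ∀ τ ∈ Icc (0:ℝ) T, 0 ≤ conv ap (u τ) x :=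
    fun τ hτ => conv_nonneg' hap_pos (hu_pos τ hτ) x
  have hgv0 : ∀ τ ∈ Icc (0:ℝ) T, 0 ≤ conv ap (v τ) x :=
    fun τ hτ => conv_nonneg' hap_pos (hv_pos τ hτ) x
  have hgvb : ∀ τ ∈ Icc (0:ℝ) T, conv ap (v τ) x ≤ L * b := fun τ hτ => by
    have := conv_abs_le hap hap_pos (hv_meas τ hτ) hb.le (aev τ hτ) x
    have h2 : Ap * b ≤ L * b := mul_le_mul_of_nonneg_right hapm hb.le
    exact (le_abs_self _).trans (this.trans h2)
  have hCuv : ∀ τ ∈ Icc (0:ℝ) T, |conv am (u τ) x - conv am (v τ) x| ≤ Am * N := by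
    intro τ hτ
    have heq : conv am (u τ) x - conv am (v τ) x
        = conv am (fun y => u τ y - v τ y) x :=
      conv_sub ham (hu_meas τ hτ) (hv_meas τ hτ) (aeu τ hτ) (aev τ hτ) x
    rw [heq]
    exact conv_abs_le ham ham_pos ((hu_meas τ hτ).sub (hv_meas τ hτ)) hN (hNle τ hτ) x
  have hguv : ∀ τ ∈ Icc (0:ℝ) T, |conv ap (u τ) x - conv ap (v τ) x| ≤ L * N := by
    intro τ hτ
    have heq : conv ap (u τ) x - conv ap (v τ) x
        = conv ap (fun y => u τ y - v τ y) x :=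
      conv_sub hap (hu_meas τ hτ) (hv_meas τ hτ) (aeu τ hτ) (aev τ hτ) x
    rw [heq]
    refine (conv_abs_le hap hap_pos ((hu_meas τ hτ).sub (hv_meas τ hτ)) hN
      (hNle τ hτ) x).trans ?_
    exact mul_le_mul_of_nonneg_right hapm hN
  -- continuity of integrands in time
  have contCu : ContinuousOn (fun τ => conv am (u τ) x) (Icc 0 T) :=
    conv_contOn hb.le ham hu_meas hu_bdd hu_cont x
  have contCv : ContinuousOn (fun τ => conv am (v τ) x) (Icc 0 T) :=
    conv_contOn hb.le ham hv_meas hv_bdd hv_cont x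
  have contgu : ContinuousOn (fun τ => conv ap (u τ) x) (Icc 0 T) :=
    conv_contOn hb.le hap hu_meas hu_bdd hu_cont x
  have contgv : ContinuousOn (fun τ => conv ap (v τ) x) (Icc 0 T) :=
    conv_contOn hb.le hap hv_meas hv_bdd hv_cont x
  have contexp : Continuous (fun τ : ℝ => Real.exp (eps0 * τ)) :=
    Real.continuous_exp.comp (continuous_const.mul continuous_id)
  have contGu : ContinuousOn (fun τ => Real.exp (eps0 * τ) * conv am (u τ) x) (Icc 0 T) :=
    contexp.continuousOn.mul contCu
  have contGv : ContinuousOn (fun τ => Real.exp (eps0 * τ) * conv am (v τ) x) (Icc 0 T) :=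
    contexp.continuousOn.mul contCv
  have IntGu : IntegrableOn (fun τ => Real.exp (eps0 * τ) * conv am (u τ) x)
      (Icc 0 T) volume := contGu.integrableOn_compact isCompact_Icc
  have IntGv : IntegrableOn (fun τ => Real.exp (eps0 * τ) * conv am (v τ) x)
      (Icc 0 T) volume := contGv.integrableOn_compact isCompact_Icc
  have Intexp : IntegrableOn (fun τ => Real.exp (eps0 * τ)) (Icc 0 T) volume :=
    contexp.continuousOn.integrableOn_compact isCompact_Icc
  -- generic bound for inner time-integral differences
  have hsub : ∀ r s : ℝ, 0 ≤ r → s ≤ T → Ioc r s ⊆ Icc (0:ℝ) T := by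
    intro r s hr hs y hy
    exact ⟨hr.trans hy.1.le, hy.2.trans hs⟩
  have hIJ : ∀ r s : ℝ, 0 ≤ r → s ≤ T →
      |(∫ τ in Ioc r s, Real.exp (eps0 * τ) * conv am (u τ) x)
        - ∫ τ in Ioc r s, Real.exp (eps0 * τ) * conv am (v τ) x| ≤ Am * N * IT := by
    intro r s hr hs
    have hiu := IntGu.mono_set (hsub r s hr hs)
    have hiv := IntGv.mono_set (hsub r s hr hs)
    rw [← integral_sub hiu hiv, ← Real.norm_eq_abs]
    have hge : IntegrableOn (fun τ => Real.exp (eps0 * τ) * (Am * N)) (Ioc r s) volume :=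
      (Intexp.mono_set (hsub r s hr hs)).mul_const _
    refine (norm_integral_le_of_norm_le hge ?_).trans ?_
    · rw [ae_restrict_iff' measurableSet_Ioc]
      refine Eventually.of_forall fun τ hτ => ?_
      have hτ' : τ ∈ Icc (0:ℝ) T := hsub r s hr hs hτ
      rw [Real.norm_eq_abs, ← mul_sub, abs_mul, abs_of_pos (Real.exp_pos _)]
      exact mul_le_mul_of_nonneg_left (hCuv τ hτ') (Real.exp_pos _).le
    · rw [integral_mul_const]
      have h1 : (∫ τ in Ioc r s, Real.exp (eps0 * τ)) ≤ IT := by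
        rcases le_or_gt r s with hrs | hrs
        · refine setIntegral_mono_set (Intexp.mono_set Ioc_subset_Icc_self) ?_ ?_
          · exact Eventually.of_forall fun τ => (Real.exp_pos _).le
          · exact HasSubset.Subset.eventuallyLE (Ioc_subset_Ioc hr hs)
        · rw [Ioc_eq_empty (not_lt.2 hrs.le), setIntegral_empty]; exact hIT
      calc (∫ τ in Ioc r s, Real.exp (eps0 * τ)) * (Am * N) ≤ IT * (Am * N) :=
            mul_le_mul_of_nonneg_right h1 (mul_nonneg hAm hN)
        _ = Am * N * IT := by ring
  -- nonnegativity of inner integrals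
  have hInn_u : ∀ r s : ℝ, 0 ≤ r → s ≤ T →
      0 ≤ ∫ τ in Ioc r s, Real.exp (eps0 * τ) * conv am (u τ) x := by
    intro r s hr hs
    exact setIntegral_nonneg measurableSet_Ioc fun τ hτ =>
      mul_nonneg (Real.exp_pos _).le (hCu0 τ (hsub r s hr hs hτ))
  have hInn_v : ∀ r s : ℝ, 0 ≤ r → s ≤ T →
      0 ≤ ∫ τ in Ioc r s, Real.exp (eps0 * τ) * conv am (v τ) x := by
    intro r s hr hs
    exact setIntegral_nonneg measurableSet_Ioc fun τ hτ =>
      mul_nonneg (Real.exp_pos _).le (hCv0 τ (hsub r s hr hs hτ))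
  -- split of inner integrals
  have hsplit : ∀ (G : ℝ → ℝ), IntegrableOn G (Icc 0 T) volume → ∀ τ ∈ Icc 0 t,
      (∫ s in Ioc τ t, G s) = (∫ s in Ioc (0:ℝ) t, G s) - ∫ s in Ioc (0:ℝ) τ, G s := by
    intro G hG τ hτ
    have h1 : Ioc (0:ℝ) τ ∪ Ioc τ t = Ioc 0 t := Ioc_union_Ioc_eq_Ioc hτ.1 hτ.2
    have h2 := setIntegral_union (μ := volume) (f := G) (Set.Ioc_disjoint_Ioc_of_le le_rfl)
      measurableSet_Ioc (hG.mono_set (hsub 0 τ le_rfl (hτ.2.trans htT)))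
      (hG.mono_set (hsub τ t hτ.1 htT))
    rw [h1] at h2
    linarith
  have hIccsub : Icc (0:ℝ) t ⊆ Icc 0 T := Icc_subset_Icc le_rfl htT
  -- continuity and integrability of the outer integrands
  have contOut : ∀ (g C : ℝ → ℝ), ContinuousOn g (Icc 0 T) →
      IntegrableOn C (Icc 0 T) volume →
      IntegrableOn (fun τ => g τ * Real.exp (-L * (t - τ) - ∫ s in Ioc τ t, C s))
        (Ioc 0 t) volume := by
    intro g C hg hC
    have hP : ContinuousOn (fun τ => ∫ s in Ioc (0:ℝ) τ, C s) (Icc 0 T) :=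
      intervalIntegral.continuousOn_primitive hC
    have c1 : ContinuousOn (fun τ => -L * (t - τ) -
        ((∫ s in Ioc (0:ℝ) t, C s) - ∫ s in Ioc (0:ℝ) τ, C s)) (Icc 0 t) := by
      apply ContinuousOn.sub
      · exact (continuous_const.mul (continuous_const.sub continuous_id)).continuousOn
      · exact ContinuousOn.sub continuousOn_const (hP.mono hIccsub)
    have c2 : ContinuousOn (fun τ => g τ * Real.exp (-L * (t - τ) -
        ((∫ s in Ioc (0:ℝ) t, C s) - ∫ s in Ioc (0:ℝ) τ, C s))) (Icc 0 t) :=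
      (hg.mono hIccsub).mul (Real.continuous_exp.comp_continuousOn c1)
    have c3 : ContinuousOn (fun τ => g τ * Real.exp (-L * (t - τ) - ∫ s in Ioc τ t, C s))
        (Icc 0 t) := by
      refine c2.congr fun τ hτ => ?_
      rw [hsplit C hC τ hτ]
    exact (c3.integrableOn_compact isCompact_Icc).mono_set Ioc_subset_Icc_self
  have IntOut_u : IntegrableOn (fun τ => conv ap (u τ) x *
      Real.exp (-L * (t - τ) - ∫ s in Ioc τ t, Real.exp (eps0 * s) * conv am (u s) x))
      (Ioc 0 t) volume := contOut _ _ contgu IntGu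
  have IntOut_v : IntegrableOn (fun τ => conv ap (v τ) x *
      Real.exp (-L * (t - τ) - ∫ s in Ioc τ t, Real.exp (eps0 * s) * conv am (v s) x))
      (Ioc 0 t) volume := contOut _ _ contgv IntGv
  set K : ℝ := N + b * (Am * N * IT) with hKdef
  have hK : 0 ≤ K := by positivity
  -- pointwise bound for the outer integrand difference
  have hptw : ∀ τ ∈ Ioc (0:ℝ) t,
      ‖conv ap (u τ) x *
          Real.exp (-L * (t - τ) - ∫ s in Ioc τ t, Real.exp (eps0 * s) * conv am (u s) x)
        - conv ap (v τ) x *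
          Real.exp (-L * (t - τ) - ∫ s in Ioc τ t, Real.exp (eps0 * s) * conv am (v s) x)‖
      ≤ L * K * Real.exp (-L * (t - τ)) := by
    intro τ hτ
    have hτ' : τ ∈ Icc (0:ℝ) T := hsub 0 t le_rfl htT hτ
    have hIu0 : 0 ≤ ∫ s in Ioc τ t, Real.exp (eps0 * s) * conv am (u s) x :=
      hInn_u τ t hτ.1.le htT
    have hIv0 : 0 ≤ ∫ s in Ioc τ t, Real.exp (eps0 * s) * conv am (v s) x :=
      hInn_v τ t hτ.1.le htT
    have hIJτ := hIJ τ t hτ.1.le htT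
    have hLτ : 0 ≤ L * (t - τ) := mul_nonneg hL.le (sub_nonneg.2 hτ.2)
    set Iu : ℝ := ∫ s in Ioc τ t, Real.exp (eps0 * s) * conv am (u s) x
    set Iv : ℝ := ∫ s in Ioc τ t, Real.exp (eps0 * s) * conv am (v s) x
    have e1 : Real.exp (-L * (t - τ) - Iu) ≤ Real.exp (-L * (t - τ)) :=
      Real.exp_le_exp.2 (by linarith)
    have hfac : ∀ I : ℝ, Real.exp (-L * (t - τ) - I)
        = Real.exp (-L * (t - τ)) * Real.exp (-I) := fun I => by
      rw [← Real.exp_add]; ring_nf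
    have e2 : |Real.exp (-Iu) - Real.exp (-Iv)| ≤ Am * N * IT := by
      refine (abs_exp_sub_exp (by linarith) (by linarith)).trans ?_
      rw [neg_sub_neg, abs_sub_comm]
      exact hIJτ
    have hdec : conv ap (u τ) x * Real.exp (-L * (t - τ) - Iu)
        - conv ap (v τ) x * Real.exp (-L * (t - τ) - Iv)
        = (conv ap (u τ) x - conv ap (v τ) x) * Real.exp (-L * (t - τ) - Iu)
          + conv ap (v τ) x
            * (Real.exp (-L * (t - τ) - Iu) - Real.exp (-L * (t - τ) - Iv)) := by ring
    rw [Real.norm_eq_abs, hdec]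
    have b1 : |(conv ap (u τ) x - conv ap (v τ) x) * Real.exp (-L * (t - τ) - Iu)|
        ≤ L * N * Real.exp (-L * (t - τ)) := by
      rw [abs_mul, abs_of_pos (Real.exp_pos _)]
      exact mul_le_mul (hguv τ hτ') e1 (Real.exp_pos _).le
        (mul_nonneg hL.le hN)
    have b2 : |conv ap (v τ) x
          * (Real.exp (-L * (t - τ) - Iu) - Real.exp (-L * (t - τ) - Iv))|
        ≤ L * b * (Real.exp (-L * (t - τ)) * (Am * N * IT)) := by
      rw [abs_mul]
      have h3 : |Real.exp (-L * (t - τ) - Iu) - Real.exp (-L * (t - τ) - Iv)|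
          ≤ Real.exp (-L * (t - τ)) * (Am * N * IT) := by
        rw [hfac Iu, hfac Iv, ← mul_sub, abs_mul, abs_of_pos (Real.exp_pos _)]
        exact mul_le_mul_of_nonneg_left e2 (Real.exp_pos _).le
      have h4 : |conv ap (v τ) x| ≤ L * b := by
        rw [abs_of_nonneg (hgv0 τ hτ')]; exact hgvb τ hτ'
      exact mul_le_mul h4 h3 (abs_nonneg _) (mul_nonneg hL.le hb.le)
    calc |(conv ap (u τ) x - conv ap (v τ) x) * Real.exp (-L * (t - τ) - Iu)
          + conv ap (v τ) x
            * (Real.exp (-L * (t - τ) - Iu) - Real.exp (-L * (t - τ) - Iv))|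
        ≤ |(conv ap (u τ) x - conv ap (v τ) x) * Real.exp (-L * (t - τ) - Iu)|
          + |conv ap (v τ) x
            * (Real.exp (-L * (t - τ) - Iu) - Real.exp (-L * (t - τ) - Iv))| := abs_add_le _ _
      _ ≤ L * N * Real.exp (-L * (t - τ))
          + L * b * (Real.exp (-L * (t - τ)) * (Am * N * IT)) := add_le_add b1 b2
      _ = L * K * Real.exp (-L * (t - τ)) := by rw [hKdef]; ring
  -- integral of the bound
  have hbnd_int : IntegrableOn (fun τ => L * K * Real.exp (-L * (t - τ))) (Ioc 0 t) volume := by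
    have : Continuous (fun τ : ℝ => L * K * Real.exp (-L * (t - τ))) := by
      exact continuous_const.mul (Real.continuous_exp.comp
        (continuous_const.mul (continuous_const.sub continuous_id)))
    exact (this.continuousOn.integrableOn_compact isCompact_Icc).mono_set Ioc_subset_Icc_self
  have hbint : (∫ τ in Ioc (0:ℝ) t, L * K * Real.exp (-L * (t - τ)))
      = K * (1 - Real.exp (-L * t)) := by
    have h1 : ∀ τ : ℝ, L * K * Real.exp (-L * (t - τ))
        = (L * K * Real.exp (-L * t)) * Real.exp (L * τ) := fun τ => by
      rw [mul_assoc, mul_assoc, ← Real.exp_add]; ring_nf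
    simp_rw [h1]
    rw [← intervalIntegral.integral_of_le ht0, intervalIntegral.integral_const_mul,
      intervalIntegral.integral_comp_mul_left Real.exp hL.ne']
    rw [mul_zero, integral_exp, Real.exp_zero, smul_eq_mul]
    have h2 : Real.exp (-L * t) = (Real.exp (L * t))⁻¹ := by
      rw [show -L * t = -(L * t) by ring, Real.exp_neg]
    rw [h2]
    have h3 : Real.exp (L * t) ≠ 0 := (Real.exp_pos _).ne'
    field_simp
  -- term 2
  have hterm2 : |(∫ τ in Ioc (0:ℝ) t, conv ap (u τ) x *
        Real.exp (-L * (t - τ) - ∫ s in Ioc τ t, Real.exp (eps0 * s) * conv am (u s) x))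
      - ∫ τ in Ioc (0:ℝ) t, conv ap (v τ) x *
        Real.exp (-L * (t - τ) - ∫ s in Ioc τ t, Real.exp (eps0 * s) * conv am (v s) x)|
      ≤ K * (1 - Real.exp (-L * t)) := by
    rw [← integral_sub IntOut_u IntOut_v, ← Real.norm_eq_abs]
    refine (norm_integral_le_of_norm_le hbnd_int ?_).trans (le_of_eq hbint)
    rw [ae_restrict_iff' measurableSet_Ioc]
    exact Eventually.of_forall hptw
  -- term 1
  have hterm1 : |ρ0 x * Real.exp (-L * t -
        ∫ τ in Ioc (0:ℝ) t, Real.exp (eps0 * τ) * conv am (u τ) x)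
      - ρ0 x * Real.exp (-L * t -
        ∫ τ in Ioc (0:ℝ) t, Real.exp (eps0 * τ) * conv am (v τ) x)|
      ≤ b * (Real.exp (-L * t) * (Am * N * IT)) := by
    set Iu : ℝ := ∫ τ in Ioc (0:ℝ) t, Real.exp (eps0 * τ) * conv am (u τ) x
    set Iv : ℝ := ∫ τ in Ioc (0:ℝ) t, Real.exp (eps0 * τ) * conv am (v τ) x
    have hIu0 : 0 ≤ Iu := hInn_u 0 t le_rfl htT
    have hIv0 : 0 ≤ Iv := hInn_v 0 t le_rfl htT
    have hIJ0 := hIJ 0 t le_rfl htT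
    have hLt : 0 ≤ L * t := mul_nonneg hL.le ht0
    rw [← mul_sub, abs_mul, abs_of_nonneg hx0]
    have hfac : ∀ I : ℝ, Real.exp (-L * t - I)
        = Real.exp (-L * t) * Real.exp (-I) := fun I => by
      rw [← Real.exp_add]; ring_nf
    have h3 : |Real.exp (-L * t - Iu) - Real.exp (-L * t - Iv)|
        ≤ Real.exp (-L * t) * (Am * N * IT) := by
      rw [hfac Iu, hfac Iv, ← mul_sub, abs_mul, abs_of_pos (Real.exp_pos _)]
      refine mul_le_mul_of_nonneg_left ?_ (Real.exp_pos _).le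
      refine (abs_exp_sub_exp (by linarith) (by linarith)).trans ?_
      rw [neg_sub_neg, abs_sub_comm]
      exact hIJ0
    exact mul_le_mul hxb h3 (abs_nonneg _) hb.le
  -- assemble
  have hFdiff : Fmap m eps0 ap am ρ0 u t x - Fmap m eps0 ap am ρ0 v t x
      = (ρ0 x * Real.exp (-L * t -
          ∫ τ in Ioc (0:ℝ) t, Real.exp (eps0 * τ) * conv am (u τ) x)
        - ρ0 x * Real.exp (-L * t -
          ∫ τ in Ioc (0:ℝ) t, Real.exp (eps0 * τ) * conv am (v τ) x))
        + ((∫ τ in Ioc (0:ℝ) t, conv ap (u τ) x *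
            Real.exp (-L * (t - τ) - ∫ s in Ioc τ t, Real.exp (eps0 * s) * conv am (u s) x))
          - ∫ τ in Ioc (0:ℝ) t, conv ap (v τ) x *
            Real.exp (-L * (t - τ) - ∫ s in Ioc τ t, Real.exp (eps0 * s) * conv am (v s) x)) := by
    simp only [Fmap]
    ring
  rw [hFdiff]
  refine (abs_add_le _ _).trans ?_
  refine (add_le_add hterm1 hterm2).trans ?_
  have hexpTt : Real.exp (-L * T) ≤ Real.exp (-L * t) := by
    apply Real.exp_le_exp.2
    nlinarith
  have hexpt1 : Real.exp (-L * t) ≤ 1 := by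
    rw [Real.exp_le_one_iff]
    nlinarith
  have hmono : N * (1 - Real.exp (-L * t)) ≤ N * (1 - Real.exp (-L * T)) := by
    apply mul_le_mul_of_nonneg_left _ hN
    linarith
  nlinarith [hmono]

theorem statement11
    (d : ℕ) (hd : 1 ≤ d) (m : ℝ) (hm : 0 ≤ m)
    (aplus aminus : Rd d → ℝ)
    (hap_int : Integrable aplus volume) (ham_int : Integrable aminus volume)
    (hap_bdd : eLpNorm aplus ⊤ volume < ⊤) (ham_bdd : eLpNorm aminus ⊤ volume < ⊤)
    (hap_even : ∀ᵐ x ∂volume, aplus (-x) = aplus x)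
    (ham_even : ∀ᵐ x ∂volume, aminus (-x) = aminus x)
    (hap_pos : ∀ᵐ x ∂volume, 0 ≤ aplus x)
    (ham_pos : ∀ᵐ x ∂volume, 0 ≤ aminus x)
    (eps0 : ℝ) (heps0 : eps0 = max ((∫ x, aplus x) - m) 0)
    (hpos : 0 < m + eps0)
    (T : ℝ) (hT : 0 < T) (b : ℝ) (hb : 0 < b)
    (ρ0 : Rd d → ℝ) (hρ0_meas : AEStronglyMeasurable ρ0 volume)
    (hρ0_pos : ∀ᵐ x ∂volume, 0 ≤ ρ0 x)
    (hρ0_bdd : ∀ᵐ x ∂volume, ρ0 x ≤ b)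
    (u v : ℝ → Rd d → ℝ)
    (hu_meas : ∀ t ∈ Set.Icc (0 : ℝ) T, AEStronglyMeasurable (u t) volume)
    (hu_pos : ∀ t ∈ Set.Icc (0 : ℝ) T, ∀ᵐ x ∂volume, 0 ≤ u t x)
    (hu_bdd : ∀ t ∈ Set.Icc (0 : ℝ) T, eLpNorm (u t) ⊤ volume ≤ ENNReal.ofReal b)
    (hu_cont : ∀ t ∈ Set.Icc (0 : ℝ) T,
      Tendsto (fun s : ℝ => eLpNorm (u s - u t) ⊤ volume) (𝓝[Set.Icc (0 : ℝ) T] t) (𝓝 0))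
    (hv_meas : ∀ t ∈ Set.Icc (0 : ℝ) T, AEStronglyMeasurable (v t) volume)
    (hv_pos : ∀ t ∈ Set.Icc (0 : ℝ) T, ∀ᵐ x ∂volume, 0 ≤ v t x)
    (hv_bdd : ∀ t ∈ Set.Icc (0 : ℝ) T, eLpNorm (v t) ⊤ volume ≤ ENNReal.ofReal b)
    (hv_cont : ∀ t ∈ Set.Icc (0 : ℝ) T,
      Tendsto (fun s : ℝ => eLpNorm (v s - v t) ⊤ volume) (𝓝[Set.Icc (0 : ℝ) T] t) (𝓝 0))
 :
    (⨆ t ∈ Set.Icc (0 : ℝ) T,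
        eLpNorm (Fmap m eps0 aplus aminus ρ0 u t - Fmap m eps0 aplus aminus ρ0 v t) ⊤ volume) ≤
      ENNReal.ofReal
          (b * (∫ x, aminus x) * (∫ s in Set.Ioc (0 : ℝ) T, Real.exp (eps0 * s)) +
            (1 - Real.exp (-(m + eps0) * T))) *
        ⨆ t ∈ Set.Icc (0 : ℝ) T, eLpNorm (u t - v t) ⊤ volume ∧
    ∃ T₁ > (0 : ℝ), ∀ T' ∈ Set.Ioc (0 : ℝ) T₁,
      b * (∫ x, aminus x) * (∫ s in Set.Ioc (0 : ℝ) T', Real.exp (eps0 * s)) +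
          (1 - Real.exp (-(m + eps0) * T')) < 1 := by
  have he0 : 0 ≤ eps0 := heps0 ▸ le_max_right _ _
  have hapm : (∫ z, aplus z) ≤ m + eps0 := by
    have h1 := le_max_left ((∫ x, aplus x) - m) 0
    rw [← heps0] at h1
    linarith
  have hAm : 0 ≤ ∫ z, aminus z := integral_nonneg_of_ae ham_pos
  have hIT : 0 ≤ ∫ s in Ioc (0:ℝ) T, Real.exp (eps0 * s) :=
    setIntegral_nonneg measurableSet_Ioc fun s _ => (Real.exp_pos _).le
  have hexp1 : Real.exp (-(m + eps0) * T) ≤ 1 := Real.exp_le_one_iff.2 (by nlinarith)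
  have hq0 : 0 ≤ b * (∫ x, aminus x) * (∫ s in Ioc (0:ℝ) T, Real.exp (eps0 * s)) +
      (1 - Real.exp (-(m + eps0) * T)) := by
    have := mul_nonneg (mul_nonneg hb.le hAm) hIT
    linarith
  constructor
  · -- contraction estimate
    set S := ⨆ t ∈ Icc (0:ℝ) T, eLpNorm (u t - v t) ⊤ volume with hSdef
    have hSle : S ≤ ENNReal.ofReal (2 * b) := by
      refine iSup₂_le fun τ hτ => ?_
      refine (eLpNorm_sub_le (hu_meas τ hτ) (hv_meas τ hτ) le_top).trans ?_
      calc eLpNorm (u τ) ⊤ volume + eLpNorm (v τ) ⊤ volume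
          ≤ ENNReal.ofReal b + ENNReal.ofReal b := add_le_add (hu_bdd τ hτ) (hv_bdd τ hτ)
        _ = ENNReal.ofReal (2 * b) := by rw [← ENNReal.ofReal_add hb.le hb.le]; ring_nf
    have hSfin : S ≠ ⊤ := (hSle.trans_lt ENNReal.ofReal_lt_top).ne
    set N := S.toReal with hNdef
    have hN : 0 ≤ N := ENNReal.toReal_nonneg
    have hS : S = ENNReal.ofReal N := (ENNReal.ofReal_toReal hSfin).symm
    have hNle : ∀ τ ∈ Icc (0:ℝ) T, ∀ᵐ y ∂(volume : Measure (Rd d)),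
        |u τ y - v τ y| ≤ N := by
      intro τ hτ
      have h1 : eLpNorm (u τ - v τ) ⊤ volume ≤ ENNReal.ofReal N := by
        rw [← hS, hSdef]
        exact le_biSup (fun t => eLpNorm (u t - v t) ⊤ volume) hτ
      filter_upwards [ae_abs_le_of_eLpNorm hN h1] with y hy
      simpa using hy
    refine iSup₂_le fun t ht => ?_
    rw [hS, ← ENNReal.ofReal_mul hq0, eLpNorm_exponent_top]
    refine eLpNormEssSup_le_of_ae_bound ?_
    filter_upwards [hρ0_pos, hρ0_bdd] with x h1 h2
    rw [Pi.sub_apply, Real.norm_eq_abs]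
    exact key_pointwise hpos he0 hT hb hN hap_int ham_int hap_pos ham_pos hapm
      hu_meas hu_pos hu_bdd hu_cont hv_meas hv_pos hv_bdd hv_cont hNle ht h1 h2
  · -- smallness for small T
    have hC0 : 0 < b * (∫ z, aminus z) * Real.exp eps0 + (m + eps0) := by
      have h1 : 0 ≤ b * (∫ z, aminus z) * Real.exp eps0 :=
        mul_nonneg (mul_nonneg hb.le hAm) (Real.exp_pos _).le
      linarith
    set C : ℝ := b * (∫ z, aminus z) * Real.exp eps0 + (m + eps0) with hCdef
    refine ⟨min 1 (1 / (2 * C)), by positivity, ?_⟩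
    intro T' hT'
    have hT'0 : 0 < T' := hT'.1
    have hT'1 : T' ≤ 1 := hT'.2.trans (min_le_left _ _)
    have hT'C : T' ≤ 1 / (2 * C) := hT'.2.trans (min_le_right _ _)
    have hint : (∫ s in Ioc (0:ℝ) T', Real.exp (eps0 * s)) ≤ Real.exp eps0 * T' := by
      have hic : IntegrableOn (fun s : ℝ => Real.exp (eps0 * s)) (Ioc 0 T') volume := by
        have : Continuous (fun s : ℝ => Real.exp (eps0 * s)) :=
          Real.continuous_exp.comp (continuous_const.mul continuous_id)
        exact (this.continuousOn.integrableOn_compact isCompact_Icc).mono_set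
          Ioc_subset_Icc_self
      have h1 : (∫ s in Ioc (0:ℝ) T', Real.exp (eps0 * s))
          ≤ ∫ _s in Ioc (0:ℝ) T', Real.exp eps0 := by
        refine setIntegral_mono_on hic ?_ measurableSet_Ioc ?_
        · refine integrableOn_const ?_ (by simp)
          exact (by rw [Real.volume_Ioc]; exact ENNReal.ofReal_lt_top.ne)
        · intro s hs
          refine Real.exp_le_exp.2 ?_
          nlinarith [hs.1.le, hs.2, he0]
      rw [setIntegral_const, Real.volume_real_Ioc_of_le (by linarith), smul_eq_mul] at h1
      linarith
    have hln : 1 - Real.exp (-(m + eps0) * T') ≤ (m + eps0) * T' := by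
      nlinarith [Real.add_one_le_exp (-(m + eps0) * T')]
    have h3 : b * (∫ z, aminus z) * (∫ s in Ioc (0:ℝ) T', Real.exp (eps0 * s))
        ≤ b * (∫ z, aminus z) * (Real.exp eps0 * T') :=
      mul_le_mul_of_nonneg_left hint (mul_nonneg hb.le hAm)
    have h2 : C * T' ≤ 1 / 2 := by
      calc C * T' ≤ C * (1 / (2 * C)) := mul_le_mul_of_nonneg_left hT'C hC0.le
        _ = 1 / 2 := by field_simp
    have h4 : b * (∫ z, aminus z) * (Real.exp eps0 * T') + (m + eps0) * T' = C * T' := by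
      rw [hCdef]; ring
    linarith
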